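/- arXiv:2012.12223 — 2 statements merged into one kernel-verified Lean document; each statement's English description precedes it below -/
import Mathlib

section
/- Let (X,d) be a metric space, k ≥ 0, and A ⊆ X a set with 0 < H_k(A) < ∞ (H_k the k-dimensional Hausdorff measure). Then for H_k-almost every x ∈ A one has limsup_{r→0} H^∞_k(A ∩ B_r(x)) / r^k ≥ c for some constant c > 0 depending only on k (in fact one may take c related to the normalization of H_k, e.g. c = 2^{-k} with the diameter-based definition). -/
open MeasureTheory
open scoped ENNReal NNReal

/-- The `k`-dimensional Hausdorff pre-measure: infimum of `∑ diam(S i)^k` over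
countable covers of `A`, with no diameter restriction. -/
noncomputable def preHaus {X : Type*} [EMetricSpace X] (k : ℝ) (A : Set X) : ℝ≥0∞ :=
  ⨅ (t : ℕ → Set X) (_ : A ⊆ ⋃ n, t n), ∑' n, EMetric.diam (t n) ^ k

lemma preHaus_mono {X : Type*} [EMetricSpace X] (k : ℝ) {S T : Set X} (h : S ⊆ T) :
    preHaus k S ≤ preHaus k T := by
  refine le_iInf₂ fun t ht => ?_
  exact iInf₂_le t (h.trans ht)

lemma guard_rpow {X : Type*} [EMetricSpace X] {k : ℝ} (hk : 0 < k) (S : Set X) :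
    (⨆ _ : S.Nonempty, EMetric.diam S ^ k) = EMetric.diam S ^ k := by
  rcases S.eq_empty_or_nonempty with h | h
  · simp [h, ENNReal.zero_rpow_of_pos hk, EMetric.diam]
  · simp [h]

lemma exists_small {k : ℝ} (hk : 0 < k) {c : ℝ≥0∞} (hc : c ≠ ⊤) {δ : ℝ} (hδ : 0 < δ)
    {η : ℝ≥0∞} (hη : η ≠ 0) : ∃ r : ℝ, 0 < r ∧ r < δ ∧ c * ENNReal.ofReal r ^ k ≤ η := by
  have T : Filter.Tendsto (fun r : ℝ => c * ENNReal.ofReal r ^ k) (nhdsWithin 0 (Set.Ioi 0)) (nhds 0) := by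
    have h1 : Filter.Tendsto (fun r : ℝ => ENNReal.ofReal r) (nhdsWithin 0 (Set.Ioi 0)) (nhds 0) := by
      have := (ENNReal.continuous_ofReal.tendsto 0)
      simpa using this.mono_left nhdsWithin_le_nhds
    exact (ENNReal.tendsto_const_mul_rpow_nhds_zero_of_pos hc hk).comp h1
  have hev : ∀ᶠ r in nhdsWithin (0:ℝ) (Set.Ioi 0), c * ENNReal.ofReal r ^ k < η :=
    (T.eventually_lt_const hη.bot_lt)
  have hIoo : Set.Ioo (0:ℝ) δ ∈ nhdsWithin (0:ℝ) (Set.Ioi 0) :=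
    Ioo_mem_nhdsGT_of_mem ⟨le_refl 0, hδ⟩
  obtain ⟨r, hr1, hr2⟩ := (hev.and (Filter.eventually_of_mem hIoo fun _ h => h)).exists
  exact ⟨r, hr2.1, hr2.2, hr1.le⟩

lemma badn_closed {X : Type*} [MetricSpace X] (k : ℝ) {c : ℝ≥0∞} (hc : c ≠ ⊤) (A : Set X) (δ : ℝ) :
    IsClosed {x : X | ∀ r : ℝ, 0 < r → r < δ →
      preHaus k (A ∩ Metric.ball x r) ≤ c * ENNReal.ofReal r ^ k} := by
  rw [← isSeqClosed_iff_isClosed]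
  intro u x hu hux
  intro r hr0 hrδ
  -- for each r' ∈ (r, δ), get the bound
  have key : ∀ r' : ℝ, r < r' → r' < δ →
      preHaus k (A ∩ Metric.ball x r) ≤ c * ENNReal.ofReal r' ^ k := by
    intro r' hrr' hr'δ
    obtain ⟨j, hj⟩ : ∃ j, dist x (u j) < r' - r := by
      have := (Metric.tendsto_atTop.mp hux) (r' - r) (by linarith)
      obtain ⟨N, hN⟩ := this
      exact ⟨N, by have := hN N le_rfl; rwa [dist_comm] at this⟩
    have hsub : Metric.ball x r ⊆ Metric.ball (u j) r' := by
      intro y hy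
      rw [Metric.mem_ball] at hy ⊢
      calc dist y (u j) ≤ dist y x + dist x (u j) := dist_triangle _ _ _
        _ < r + (r' - r) := by exact add_lt_add hy hj
        _ = r' := by ring
    calc preHaus k (A ∩ Metric.ball x r) ≤ preHaus k (A ∩ Metric.ball (u j) r') :=
          preHaus_mono k (Set.inter_subset_inter_right _ hsub)
      _ ≤ c * ENNReal.ofReal r' ^ k := hu j r' (hr0.trans hrr') hr'δ
  -- take r' = r + (δ - r)/(m+2) → r
  set v : ℕ → ℝ := fun m => r + (δ - r) / (m + 2) with hv
  have hvmem : ∀ m, r < v m ∧ v m < δ := by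
    intro m
    have h1 : 0 < (δ - r) / (m + 2) := div_pos (by linarith) (by positivity)
    have h2 : (δ - r) / (m + 2) < δ - r := by
      apply div_lt_self (by linarith)
      have : (0:ℝ) ≤ m := Nat.cast_nonneg m
      linarith
    constructor <;> [simp [hv]; skip]
    · exact h1
    · simp only [hv]; linarith
  have hvt : Filter.Tendsto v Filter.atTop (nhds r) := by
    have h0 : Filter.Tendsto (fun m : ℕ => (δ - r) / (m + 2)) Filter.atTop (nhds 0) := by
      apply Filter.Tendsto.div_atTop tendsto_const_nhds
      exact Filter.tendsto_atTop_add_const_right _ 2 tendsto_natCast_atTop_atTop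
    simpa using tendsto_const_nhds.add h0
  have hT : Filter.Tendsto (fun m => c * ENNReal.ofReal (v m) ^ k) Filter.atTop
      (nhds (c * ENNReal.ofReal r ^ k)) := by
    have h1 : Filter.Tendsto (fun m => ENNReal.ofReal (v m)) Filter.atTop (nhds (ENNReal.ofReal r)) :=
      (ENNReal.continuous_ofReal.tendsto r).comp hvt
    exact ENNReal.Tendsto.const_mul (h1.ennrpow_const k) (Or.inr hc)
  exact ge_of_tendsto hT (Filter.Eventually.of_forall fun m => key (v m) (hvmem m).1 (hvmem m).2)

lemma core {X : Type} [MetricSpace X] [MeasurableSpace X] [BorelSpace X]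
    {k : ℝ} (hk : 0 < k) {c : ℝ≥0∞} (hc : c * 2 ^ k ≤ 2⁻¹)
    {A E : Set X} (hE : E ⊆ A) (hA : μH[k] A ≠ ⊤) {δn : ℝ} (hδn : 0 < δn)
    (hball : ∀ x ∈ E, ∀ r : ℝ, 0 < r → r < δn →
      preHaus k (A ∩ Metric.ball x r) ≤ c * ENNReal.ofReal r ^ k) :
    μH[k] E = 0 := by
  have h2k0 : (0:ℝ≥0∞) < 2 ^ k := ENNReal.rpow_pos (by norm_num) (by norm_num)
  have h2kt : (2:ℝ≥0∞) ^ k ≠ ⊤ := ENNReal.rpow_ne_top_of_nonneg hk.le (by norm_num)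
  have hct : c ≠ ⊤ := by
    intro h
    rw [h, ENNReal.top_mul h2k0.ne'] at hc
    simp at hc
  -- the inner infimum in the Hausdorff measure formula
  set G : ℝ≥0∞ → ℝ≥0∞ := fun ρ =>
    ⨅ (t : ℕ → Set X) (_ : E ⊆ ⋃ n, t n) (_ : ∀ n, EMetric.diam (t n) ≤ ρ),
      ∑' n, ⨆ _ : (t n).Nonempty, EMetric.diam (t n) ^ k with hGdef
  have hEq : μH[k] E = ⨆ (ρ : ℝ≥0∞) (_ : 0 < ρ), G ρ :=
    MeasureTheory.Measure.hausdorffMeasure_apply k E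
  have hGanti : ∀ ρ₁ ρ₂ : ℝ≥0∞, ρ₁ ≤ ρ₂ → G ρ₂ ≤ G ρ₁ := by
    intro ρ₁ ρ₂ h
    refine le_iInf₂ fun t ht1 => le_iInf fun ht2 => ?_
    exact iInf₂_le_of_le t ht1 (iInf_le_of_le (fun n => (ht2 n).trans h) le_rfl)
  set ρ₀ : ℝ≥0∞ := ENNReal.ofReal (δn / 4) with hρ₀
  have hρ₀pos : 0 < ρ₀ := ENNReal.ofReal_pos.mpr (by linarith)
  -- main claim: G ρ = 0 for all 0 < ρ ≤ ρ₀
  have main : ∀ ρ : ℝ≥0∞, 0 < ρ → ρ ≤ ρ₀ → G ρ = 0 := by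
    intro ρ hρ hρle
    set g := G ρ with hg
    have hgle : g ≤ μH[k] E := by
      rw [hEq]
      exact le_iSup₂ (f := fun ρ (_ : 0 < ρ) => G ρ) ρ hρ
    have hgt : g ≠ ⊤ := by
      refine ne_top_of_le_ne_top ?_ (hgle.trans (measure_mono hE))
      exact hA
    -- main inequality: for every ε ≠ 0, ≠ ⊤ : g ≤ 2⁻¹ * g + 2 * ε
    have step : ∀ ε : ℝ≥0∞, ε ≠ 0 → ε ≠ ⊤ → g ≤ 2⁻¹ * g + 2 * ε := by
      intro ε hε0 hεt
      -- near-optimal cover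
      have hlt : G ρ < g + ε := ENNReal.lt_add_right hgt hε0
      rw [hGdef] at hlt
      simp only [iInf_lt_iff] at hlt
      obtain ⟨t, ht1, ht2, ht3⟩ := hlt
      have ht3' : ∑' n, EMetric.diam (t n) ^ k < g + ε := by
        have : ∀ n, (⨆ _ : (t n).Nonempty, EMetric.diam (t n) ^ k) = EMetric.diam (t n) ^ k :=
          fun n => guard_rpow hk (t n)
        rwa [tsum_congr this] at ht3
      -- per-index refined covers
      have key : ∀ i : ℕ, ∃ s : ℕ → Set X, (E ∩ t i ⊆ ⋃ j, s j) ∧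
          (∀ j, EMetric.diam (s j) ≤ ρ) ∧
          ∑' j, EMetric.diam (s j) ^ k ≤
            c * 2 ^ k * EMetric.diam (t i) ^ k + ε * 2⁻¹ ^ (i + 1) := by
        intro i
        set εi : ℝ≥0∞ := ε * 2⁻¹ ^ (i + 1) with hεi
        have hεi0 : εi ≠ 0 := by
          simp [hεi, pow_ne_zero, hε0]
        have hεit : εi ≠ ⊤ := by
          refine ENNReal.mul_ne_top hεt ?_
          exact ENNReal.pow_ne_top (by norm_num)
        rcases (E ∩ t i).eq_empty_or_nonempty with hi | ⟨x, hxE, hxt⟩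
        · refine ⟨fun _ => ∅, by simp [hi], by simp [EMetric.diam], ?_⟩
          simp [ENNReal.zero_rpow_of_pos hk, EMetric.diam]
        -- diam bounds
        have hdρ : EMetric.diam (t i) ≤ ρ := ht2 i
        have hdt : EMetric.diam (t i) ≠ ⊤ := by
          refine ne_top_of_le_ne_top ?_ (hdρ.trans hρle)
          exact ENNReal.ofReal_ne_top
        set d := EMetric.diam (t i) with hd
        have hM_ne_top : c * 2 ^ k * d ^ k ≠ ⊤ := by
          refine ENNReal.mul_ne_top (ENNReal.mul_ne_top hct h2kt) ?_
          exact ENNReal.rpow_ne_top_of_nonneg hk.le hdt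
        have hlt2 : preHaus k (A ∩ t i) < c * 2 ^ k * d ^ k + εi := by
          rcases eq_or_lt_of_le (zero_le : 0 ≤ d) with hd0 | hd0
          · -- diam = 0 : t i ⊆ {x}
            have hsub : ∀ r : ℝ, 0 < r → A ∩ t i ⊆ A ∩ Metric.ball x r := by
              intro r hr
              refine Set.inter_subset_inter_right _ fun y hy => ?_
              have : edist y x ≤ d := EMetric.edist_le_diam_of_mem hy hxt
              rw [← hd0] at this
              have hyx : y = x := by simpa [edist_eq_zero] using le_antisymm this zero_le
              simp [hyx, Metric.mem_ball, hr]
            obtain ⟨r, hr0, hrδ, hrb⟩ := exists_small hk hct hδn (η := εi / 2)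
              (by simp [ENNReal.div_ne_zero, hεi0])
            have h1 : preHaus k (A ∩ t i) ≤ εi / 2 :=
              ((preHaus_mono k (hsub r hr0)).trans (hball x hxE r hr0 hrδ)).trans hrb
            calc preHaus k (A ∩ t i) ≤ εi / 2 := h1
              _ < εi := ENNReal.half_lt_self hεi0 hεit
              _ ≤ c * 2 ^ k * d ^ k + εi := le_add_self
          · -- diam > 0
            have hdtr : 0 < d.toReal := ENNReal.toReal_pos hd0.ne' hdt
            set r : ℝ := 2 * d.toReal with hr
            have hrδ : r < δn := by
              have : d.toReal ≤ δn / 4 := by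
                have h4 : (0:ℝ) ≤ δn / 4 := by linarith
                have := (ENNReal.le_ofReal_iff_toReal_le hdt h4).mp (hdρ.trans hρle)
                exact this
              simp only [hr]; linarith
            have hsub : t i ⊆ Metric.ball x r := by
              intro y hy
              have h1 : edist y x ≤ d := EMetric.edist_le_diam_of_mem hy hxt
              have h2 : dist y x ≤ d.toReal := by
                rw [dist_edist]
                exact ENNReal.toReal_mono hdt h1
              rw [Metric.mem_ball]
              calc dist y x ≤ d.toReal := h2
                _ < r := by simp only [hr]; linarith
            have hofr : ENNReal.ofReal r = 2 * d := by
              rw [hr, ENNReal.ofReal_mul (by norm_num), ENNReal.ofReal_toReal hdt]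
              norm_num
            calc preHaus k (A ∩ t i) ≤ preHaus k (A ∩ Metric.ball x r) :=
                  preHaus_mono k (Set.inter_subset_inter_right _ hsub)
              _ ≤ c * ENNReal.ofReal r ^ k := hball x hxE r (by positivity) hrδ
              _ = c * 2 ^ k * d ^ k := by
                  rw [hofr, ENNReal.mul_rpow_of_nonneg _ _ hk.le, mul_assoc]
              _ < c * 2 ^ k * d ^ k + εi := ENNReal.lt_add_right hM_ne_top hεi0
        rw [preHaus] at hlt2
        simp only [iInf_lt_iff] at hlt2
        obtain ⟨s, hs1, hs2⟩ := hlt2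
        refine ⟨fun j => s j ∩ t i, ?_, ?_, ?_⟩
        · intro y hy
          have : y ∈ ⋃ j, s j := hs1 ⟨hE hy.1, hy.2⟩
          obtain ⟨j, hj⟩ := Set.mem_iUnion.mp this
          exact Set.mem_iUnion.mpr ⟨j, hj, hy.2⟩
        · exact fun j => (EMetric.diam_mono Set.inter_subset_right).trans hdρ
        · refine le_trans (Summable.tsum_le_tsum (fun j => ?_) ENNReal.summable ENNReal.summable) hs2.le
          exact ENNReal.rpow_le_rpow (EMetric.diam_mono Set.inter_subset_left) hk.le
      choose s hs1 hs2 hs3 using key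
      -- combine into a single cover
      set e : ℕ ≃ ℕ × ℕ := (Denumerable.eqv (ℕ × ℕ)).symm with he
      set u : ℕ → Set X := fun n => s (e n).1 (e n).2 with hu
      have hcover : E ⊆ ⋃ n, u n := by
        intro y hy
        obtain ⟨i, hi⟩ := Set.mem_iUnion.mp (ht1 hy)
        obtain ⟨j, hj⟩ := Set.mem_iUnion.mp (hs1 i ⟨hy, hi⟩)
        refine Set.mem_iUnion.mpr ⟨e.symm (i, j), ?_⟩
        simp [hu]
        exact hj
      have hudiam : ∀ n, EMetric.diam (u n) ≤ ρ := fun n => hs2 _ _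
      have hsum : ∑' n, EMetric.diam (u n) ^ k ≤ 2⁻¹ * g + 2 * ε := by
        have h1 : ∑' n, EMetric.diam (u n) ^ k
            = ∑' p : ℕ × ℕ, EMetric.diam (s p.1 p.2) ^ k := by
          exact Equiv.tsum_eq e (fun p => EMetric.diam (s p.1 p.2) ^ k)
        rw [h1, ENNReal.tsum_prod (f := fun i j => EMetric.diam (s i j) ^ k)]
        calc ∑' i, ∑' j, EMetric.diam (s i j) ^ k
            ≤ ∑' i, (c * 2 ^ k * EMetric.diam (t i) ^ k + ε * 2⁻¹ ^ (i + 1)) :=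
              Summable.tsum_le_tsum (fun i => hs3 i) ENNReal.summable ENNReal.summable
          _ = c * 2 ^ k * (∑' i, EMetric.diam (t i) ^ k) + ε := by
              rw [ENNReal.tsum_add, ENNReal.tsum_mul_left, ENNReal.tsum_mul_left]
              congr 1
              have : ∑' i : ℕ, (2⁻¹ : ℝ≥0∞) ^ (i + 1) = 1 := by
                simp only [pow_succ]
                rw [ENNReal.tsum_mul_right, ENNReal.tsum_geometric]
                rw [ENNReal.one_sub_inv_two, inv_inv]
                exact ENNReal.mul_inv_cancel (by norm_num) (by norm_num)
              rw [this, mul_one]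
          _ ≤ 2⁻¹ * (g + ε) + ε := by gcongr
          _ = 2⁻¹ * g + (2⁻¹ * ε + ε) := by ring
          _ ≤ 2⁻¹ * g + 2 * ε := by
              gcongr
              calc 2⁻¹ * ε + ε ≤ 1 * ε + 1 * ε := by
                    gcongr <;> [exact ENNReal.inv_le_one.mpr (by norm_num); simp]
                _ = 2 * ε := by ring
      -- G ρ is below the sum of the new cover
      calc g = G ρ := hg
        _ ≤ ∑' n, ⨆ _ : (u n).Nonempty, EMetric.diam (u n) ^ k := by
            rw [hGdef]
            exact iInf₂_le_of_le u hcover (iInf_le_of_le hudiam le_rfl)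
        _ ≤ ∑' n, EMetric.diam (u n) ^ k := by
            refine Summable.tsum_le_tsum (fun n => ?_) ENNReal.summable ENNReal.summable
            rw [guard_rpow hk]
        _ ≤ 2⁻¹ * g + 2 * ε := hsum
    -- conclude g = 0
    have hhalf : ∀ ε : ℝ≥0∞, ε ≠ 0 → ε ≠ ⊤ → 2⁻¹ * g ≤ 2 * ε := by
      intro ε hε0 hεt
      have h := step ε hε0 hεt
      have hgg : 2⁻¹ * g + 2⁻¹ * g = g := by
        rw [← add_mul, ENNReal.inv_two_add_inv_two, one_mul]
      have h2 : 2⁻¹ * g + 2⁻¹ * g ≤ 2⁻¹ * g + 2 * ε := by rw [hgg]; exact h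
      exact (ENNReal.add_le_add_iff_left (ENNReal.mul_ne_top (by norm_num) hgt)).mp h2
    by_contra hg0
    have hε0 : g / 8 ≠ 0 := by
      simp only [ne_eq, ENNReal.div_eq_zero_iff, not_or]
      exact ⟨hg0, by norm_num⟩
    have hεt : g / 8 ≠ ⊤ := (ENNReal.div_lt_top hgt (by norm_num)).ne
    have hle := hhalf _ hε0 hεt
    have h1 : (2⁻¹ * g).toReal ≤ (2 * (g / 8)).toReal := by
      refine ENNReal.toReal_mono ?_ hle
      exact ENNReal.mul_ne_top (by norm_num) hεt
    rw [ENNReal.toReal_mul, ENNReal.toReal_mul, ENNReal.toReal_div] at h1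
    simp only [ENNReal.toReal_inv, ENNReal.toReal_ofNat] at h1
    have hgr : 0 < g.toReal := ENNReal.toReal_pos hg0 hgt
    linarith
  -- finish
  rw [hEq]
  refine le_antisymm ?_ zero_le
  refine iSup₂_le fun ρ hρ => ?_
  rcases le_or_gt ρ ρ₀ with h | h
  · exact (main ρ hρ h).le
  · calc G ρ ≤ G ρ₀ := hGanti ρ₀ ρ h.le
      _ = 0 := main ρ₀ hρ₀pos le_rfl

/-- For a set `A` with `0 < H_k(A) < ∞`, at `H_k`-a.e. `x ∈ A` the upper density
`limsup_{r→0} H^∞_k(A ∩ B_r(x)) / r^k` is at least a positive constant `c`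
depending only on `k`. -/
theorem stmt1 (k : ℝ) (hk : 0 ≤ k) :
    ∃ c : ℝ≥0∞, 0 < c ∧
      ∀ (X : Type) [MetricSpace X] [MeasurableSpace X] [BorelSpace X] (A : Set X),
        0 < μH[k] A → μH[k] A < ⊤ →
        ∀ᵐ x ∂(μH[k].restrict A),
          c ≤ Filter.limsup
                (fun r : ℝ => preHaus k (A ∩ Metric.ball x r) / ENNReal.ofReal r ^ k)
                (nhdsWithin 0 (Set.Ioi 0)) := by
  rcases hk.eq_or_lt with hk0 | hk0
  · -- k = 0 : preHaus is infinite, limsup = ⊤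
    subst hk0
    refine ⟨1, zero_lt_one, fun X _ _ _ A _ _ => ?_⟩
    refine Filter.Eventually.of_forall fun x => ?_
    have hph : ∀ S : Set X, preHaus (0:ℝ) S = ⊤ := by
      intro S
      refine le_antisymm le_top ?_
      refine le_iInf₂ fun t ht => ?_
      have : ∀ n : ℕ, EMetric.diam (t n) ^ (0:ℝ) = 1 := fun n => ENNReal.rpow_zero
      rw [tsum_congr this]
      exact le_of_eq (ENNReal.tsum_const_eq_top_of_ne_zero one_ne_zero).symm
    have hfun : (fun r : ℝ => preHaus (0:ℝ) (A ∩ Metric.ball x r) / ENNReal.ofReal r ^ (0:ℝ))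
        = fun _ => (⊤ : ℝ≥0∞) := by
      funext r
      rw [hph, ENNReal.rpow_zero]
      simp
    rw [hfun, Filter.limsup_const]
    exact le_top
  · -- k > 0
    set c : ℝ≥0∞ := 2⁻¹ * ((2:ℝ≥0∞) ^ k)⁻¹ with hcdef
    have h2k0 : (0:ℝ≥0∞) < 2 ^ k := ENNReal.rpow_pos (by norm_num) (by norm_num)
    have h2kt : (2:ℝ≥0∞) ^ k ≠ ⊤ := ENNReal.rpow_ne_top_of_nonneg hk (by norm_num)
    have hcpos : 0 < c := by
      refine ENNReal.mul_pos (by norm_num) ?_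
      simp [ENNReal.inv_ne_zero, h2kt]
    have hcne : c ≠ ⊤ := by
      refine ENNReal.mul_ne_top (by norm_num) ?_
      simp [h2k0.ne']
    have hc : c * 2 ^ k ≤ 2⁻¹ := by
      rw [hcdef, mul_assoc, ENNReal.inv_mul_cancel h2k0.ne' h2kt, mul_one]
    refine ⟨c, hcpos, fun X _ _ _ A hA0 hAt => ?_⟩
    set L : X → ℝ≥0∞ := fun x => Filter.limsup
      (fun r : ℝ => preHaus k (A ∩ Metric.ball x r) / ENNReal.ofReal r ^ k)
      (nhdsWithin 0 (Set.Ioi 0)) with hL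
    set bad : ℕ → Set X := fun n => {x : X | ∀ r : ℝ, 0 < r → r < 1 / (n + 1) →
      preHaus k (A ∩ Metric.ball x r) ≤ c * ENNReal.ofReal r ^ k} with hbad
    have hclosed : ∀ n, IsClosed (bad n) := fun n => badn_closed k hcne A _
    have hnull : ∀ n, μH[k] (bad n ∩ A) = 0 := by
      intro n
      refine core hk0 hc Set.inter_subset_right hAt.ne
        (δn := 1 / (n + 1)) (by positivity) ?_
      intro x hx r hr0 hrn
      exact hx.1 r hr0 hrn
    have hsub : {x : X | ¬ c ≤ L x} ⊆ ⋃ n, bad n := by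
      intro x hx
      have hlt : L x < c := not_le.mp hx
      have hev : ∀ᶠ r in nhdsWithin (0:ℝ) (Set.Ioi 0),
          preHaus k (A ∩ Metric.ball x r) / ENNReal.ofReal r ^ k < c :=
        Filter.eventually_lt_of_limsup_lt hlt
      rw [Filter.eventually_iff] at hev
      rw [mem_nhdsGT_iff_exists_Ioo_subset] at hev
      obtain ⟨u, hu, husub⟩ := hev
      obtain ⟨n, hn⟩ := exists_nat_one_div_lt (Set.mem_Ioi.mp hu)
      refine Set.mem_iUnion.mpr ⟨n, ?_⟩
      intro r hr0 hrn
      have hrIoo : r ∈ Set.Ioo (0:ℝ) u := ⟨hr0, lt_trans hrn hn⟩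
      have hdiv : preHaus k (A ∩ Metric.ball x r) / ENNReal.ofReal r ^ k < c := husub hrIoo
      have hb0 : ENNReal.ofReal r ^ k ≠ 0 :=
        (ENNReal.rpow_pos (ENNReal.ofReal_pos.mpr hr0) ENNReal.ofReal_ne_top).ne'
      have hbt : ENNReal.ofReal r ^ k ≠ ⊤ :=
        ENNReal.rpow_ne_top_of_nonneg hk ENNReal.ofReal_ne_top
      exact le_of_lt ((ENNReal.div_lt_iff (Or.inl hb0) (Or.inl hbt)).mp hdiv)
    rw [MeasureTheory.ae_iff]
    refine le_antisymm ?_ zero_le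
    calc (μH[k].restrict A) {x | ¬ c ≤ L x}
        ≤ (μH[k].restrict A) (⋃ n, bad n) := measure_mono hsub
      _ ≤ ∑' n, (μH[k].restrict A) (bad n) := measure_iUnion_le _
      _ = 0 := by
          refine ENNReal.tsum_eq_zero.mpr fun n => ?_
          rw [Measure.restrict_apply (hclosed n).measurableSet]
          exact hnull n
end

section
/- For any two distinct points x, y ∈ ℝ^n (n ≥ 2), let m = (x+y)/2, let B_r be the (n-1)-dimensional ball of radius r ∈ (0, |x−y|] centered at m in the hyperplane through m orthogonal to the segment [x,y], and for z ∈ B_r let γ_z be the concatenation of the segments [x,z] and [z,y]. Then there is a constant C₀ depending only on n (not on x, y, r) such that every γ_z satisfies the quasi-convexity bound: the length of γ_z restricted between parameters s and t is at most C₀ times the distance between γ_z(s) and γ_z(t). -/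
open scoped RealInnerProductSpace

/-- The unit-speed curve from `x` to `y` through `z`: follow the segment `[x,z]`
(arc-length parameterized), then the segment `[z,y]`. -/
noncomputable def gammaZ {n : ℕ} (x y z : EuclideanSpace ℝ (Fin n)) (t : ℝ) :
    EuclideanSpace ℝ (Fin n) :=
  if t ≤ dist x z then x + (t / dist x z) • (z - x)
  else z + ((t - dist x z) / dist z y) • (y - z)

private lemma quasi_aux (a b W Q L D : ℝ) (ha : 0 ≤ a) (hb : 0 ≤ b)
    (hW0 : 0 ≤ W) (hQ0 : 0 ≤ Q) (hWQ : W ≤ Q) (hL2 : L ^ 2 = W + Q / 4)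
    (hDL : D ^ 2 * L ^ 2 = a ^ 2 * L ^ 2 + 2 * a * b * (Q / 4 - W) + b ^ 2 * L ^ 2) :
    (a + b) ^ 2 * L ^ 2 ≤ 9 * (D ^ 2 * L ^ 2) := by
  nlinarith [mul_nonneg (sq_nonneg (a - b)) hW0, mul_nonneg (sq_nonneg (a - b)) hQ0,
    mul_nonneg (mul_nonneg ha hb) (sub_nonneg.2 hWQ), mul_nonneg (mul_nonneg ha hb) hQ0]

set_option maxHeartbeats 1000000

private lemma quasi_aux2 (c D : ℝ) (hc : 0 ≤ c) (hD : 0 ≤ D)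
    (h : c ^ 2 ≤ 9 * D ^ 2) : c ≤ 3 * D := by
  nlinarith

/-- Uniform quasi-convexity of the curves `γ_z` of the Semmes family in `ℝ^n`:
there is `C₀ = C₀(n)` such that for all `x ≠ y`, all radii `r ∈ (0, |x-y|]`, and all
`z` in the `(n-1)`-ball of radius `r` about the midpoint in the perpendicular bisector
hyperplane, the length of `γ_z` between parameters `s ≤ t` (which is `t - s`, by
arc-length parameterization) is at most `C₀ · dist(γ_z(s), γ_z(t))`. -/
theorem stmt3 (n : ℕ) (hn : 2 ≤ n) :
    ∃ C₀ : ℝ, 0 < C₀ ∧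
      ∀ (x y z : EuclideanSpace ℝ (Fin n)) (r : ℝ),
        x ≠ y → 0 < r → r ≤ dist x y →
        ⟪z - midpoint ℝ x y, y - x⟫ = 0 →
        dist z (midpoint ℝ x y) ≤ r →
        ∀ s t : ℝ, 0 ≤ s → s ≤ t → t ≤ dist x z + dist z y →
          t - s ≤ C₀ * dist (gammaZ x y z s) (gammaZ x y z t) := by
  refine ⟨3, by norm_num, ?_⟩
  intro x y z r hxy hr hrd hperp hzr s t hs hst ht
  set m := midpoint ℝ x y with hm
  set w := z - m with hwdef
  set e := y - x with hedef
  have hperp' : ⟪e, w⟫ = 0 := by rw [real_inner_comm]; exact hperp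
  have hmeq : m = (2⁻¹ : ℝ) • (x + y) := by
    rw [hm, midpoint_eq_smul_add, invOf_eq_inv]
  have hzx : z - x = w + (2⁻¹ : ℝ) • e := by
    rw [hwdef, hedef, hmeq]; module
  have hyz : y - z = (2⁻¹ : ℝ) • e - w := by
    rw [hwdef, hedef, hmeq]; module
  have hd : (0:ℝ) < dist x y := dist_pos.2 hxy
  have hde : dist x y = ‖e‖ := by rw [dist_eq_norm', hedef]
  have he0 : (0:ℝ) < ‖e‖ := hde ▸ hd
  have hwe : ‖w‖ ≤ ‖e‖ := by
    have : dist z m = ‖w‖ := by rw [dist_eq_norm, hwdef]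
    rw [← this, ← hde]; exact hzr.trans hrd
  have hW : ‖w‖ ^ 2 ≤ ‖e‖ ^ 2 := by
    have := norm_nonneg w
    nlinarith
  have hhe : ‖(2⁻¹ : ℝ) • e‖ ^ 2 = ‖e‖ ^ 2 / 4 := by
    rw [norm_smul, Real.norm_eq_abs, mul_pow, sq_abs]; ring
  -- squared length of the two legs
  have hxz2 : (dist x z) ^ 2 = ‖w‖ ^ 2 + ‖e‖ ^ 2 / 4 := by
    rw [dist_eq_norm, norm_sub_rev, ← real_inner_self_eq_norm_sq, hzx]
    simp only [inner_add_left, inner_add_right, inner_sub_left, inner_sub_right,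
      real_inner_smul_left, real_inner_smul_right, hperp, hperp',
      real_inner_self_eq_norm_sq, hhe]
    ring
  have hzy2 : (dist z y) ^ 2 = ‖w‖ ^ 2 + ‖e‖ ^ 2 / 4 := by
    rw [dist_eq_norm, norm_sub_rev, ← real_inner_self_eq_norm_sq, hyz]
    simp only [inner_add_left, inner_add_right, inner_sub_left, inner_sub_right,
      real_inner_smul_left, real_inner_smul_right, hperp, hperp',
      real_inner_self_eq_norm_sq, hhe]
    ring
  set L := dist x z with hLdef
  have hLnn : (0:ℝ) ≤ L := dist_nonneg
  have hL2pos : (0:ℝ) < L ^ 2 := by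
    rw [hxz2]; nlinarith [norm_nonneg w]
  have hL : (0:ℝ) < L := lt_of_le_of_ne hLnn fun h => by
    rw [← h] at hL2pos; simp at hL2pos
  have hzy : dist z y = L := by
    have h1 : dist z y = Real.sqrt ((dist z y) ^ 2) := (Real.sqrt_sq dist_nonneg).symm
    rw [h1, hzy2, ← hxz2, Real.sqrt_sq hLnn]
  have hu : ‖z - x‖ = L := by rw [hLdef, dist_eq_norm, norm_sub_rev]
  have hv : ‖y - z‖ = L := by rw [← hzy, dist_eq_norm, norm_sub_rev]
  have hI : ⟪z - x, y - z⟫ = ‖e‖ ^ 2 / 4 - ‖w‖ ^ 2 := by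
    rw [hzx, hyz]
    simp only [inner_add_left, inner_add_right, inner_sub_left, inner_sub_right,
      real_inner_smul_left, real_inner_smul_right, hperp, hperp',
      real_inner_self_eq_norm_sq, hhe]
    ring
  rcases le_or_gt t L with h1 | h1
  · -- both points on the first segment
    have hsL : s ≤ L := hst.trans h1
    have hgs : gammaZ x y z s = x + (s / L) • (z - x) := by
      rw [gammaZ, if_pos hsL]
    have hgt : gammaZ x y z t = x + (t / L) • (z - x) := by
      rw [gammaZ, if_pos h1]
    have hdiff : gammaZ x y z s - gammaZ x y z t = ((s - t) / L) • (z - x) := by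
      rw [hgs, hgt, sub_div, sub_smul]; abel
    have : dist (gammaZ x y z s) (gammaZ x y z t) = t - s := by
      rw [dist_eq_norm, hdiff, norm_smul, hu, Real.norm_eq_abs, abs_div,
        abs_of_nonpos (by linarith), abs_of_pos hL]
      field_simp; ring
    rw [this]; linarith
  rcases le_or_gt s L with h2 | h2
  · -- mixed case: s on first segment, t on second
    have hgs : gammaZ x y z s = x + (s / L) • (z - x) := by
      rw [gammaZ, if_pos h2]
    have hgt : gammaZ x y z t = z + ((t - L) / L) • (y - z) := by
      rw [gammaZ, if_neg (not_le.2 h1), hzy]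
    set a := L - s with ha_def
    set b := t - L with hb_def
    have ha : 0 ≤ a := by simp [ha_def]; linarith
    have hb : 0 ≤ b := by simp [hb_def]; linarith
    have hdiff : gammaZ x y z s - gammaZ x y z t
        = -((a / L) • (z - x) + (b / L) • (y - z)) := by
      rw [hgs, hgt, ha_def, hb_def]
      have hLne : (L:ℝ) ≠ 0 := hL.ne'
      rw [sub_div, sub_div, sub_smul, sub_smul, div_self hLne]
      module
    set D := dist (gammaZ x y z s) (gammaZ x y z t) with hDdef
    have hD0 : 0 ≤ D := dist_nonneg
    have hexp : D ^ 2 = (a / L) ^ 2 * L ^ 2 + 2 * ((a / L) * ((b / L) *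
        (‖e‖ ^ 2 / 4 - ‖w‖ ^ 2))) + (b / L) ^ 2 * L ^ 2 := by
      rw [hDdef, dist_eq_norm, hdiff, norm_neg, norm_add_sq_real,
        real_inner_smul_left, real_inner_smul_right, hI, norm_smul, norm_smul,
        Real.norm_eq_abs, Real.norm_eq_abs, hu, hv, mul_pow, mul_pow, sq_abs, sq_abs]
    have hLne : (L:ℝ) ≠ 0 := hL.ne'
    have hDL : D ^ 2 * L ^ 2 = a ^ 2 * L ^ 2 + 2 * a * b * (‖e‖ ^ 2 / 4 - ‖w‖ ^ 2)
        + b ^ 2 * L ^ 2 := by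
      rw [hexp]; field_simp
    have h9 : (a + b) ^ 2 * L ^ 2 ≤ 9 * (D ^ 2 * L ^ 2) :=
      quasi_aux a b (‖w‖ ^ 2) (‖e‖ ^ 2) L D ha hb (sq_nonneg _) (sq_nonneg _) hW hxz2 hDL
    have h9' : (a + b) ^ 2 ≤ 9 * D ^ 2 := by
      have := le_of_mul_le_mul_right (by linarith [h9] : (a + b) ^ 2 * L ^ 2 ≤ (9 * D ^ 2) * L ^ 2)
        (pow_pos hL 2)
      exact this
    have hab : a + b = t - s := by rw [ha_def, hb_def]; ring
    rw [hab] at h9'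
    have := quasi_aux2 (t - s) D (by linarith) hD0 h9'
    linarith
  · -- both points on the second segment
    have hgs : gammaZ x y z s = z + ((s - L) / L) • (y - z) := by
      rw [gammaZ, if_neg (not_le.2 h2), hzy]
    have hgt : gammaZ x y z t = z + ((t - L) / L) • (y - z) := by
      rw [gammaZ, if_neg (not_le.2 h1), hzy]
    have hdiff : gammaZ x y z s - gammaZ x y z t = ((s - t) / L) • (y - z) := by
      rw [hgs, hgt, show (s - t) / L = (s - L) / L - (t - L) / L by ring, sub_smul]; abel
    have : dist (gammaZ x y z s) (gammaZ x y z t) = t - s := by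
      rw [dist_eq_norm, hdiff, norm_smul, hv, Real.norm_eq_abs, abs_div,
        abs_of_nonpos (by linarith), abs_of_pos hL]
      field_simp; ring
    rw [this]; linarith
end
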